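/- For any vectors x ∈ ℝ^{d1}, y ∈ ℝ^{d2}, any β > 0, and any index set Ω ⊆ [d1]×[d2] with at most α·d2 elements in each row and at most α·d1 elements in each column, we have Σ_{(i,j)∈Ω} |x_i|·|y_j| ≤ (α/2)·(β^{-1}·d2·‖x‖_2² + β·d1·‖y‖_2²). -/

import Mathlib

open Matrix
open scoped BigOperators

/-- Frobenius norm of a real matrix. -/
noncomputable def frob {m n : ℕ} (A : Matrix (Fin m) (Fin n) ℝ) : ℝ :=
  Real.sqrt (∑ i, ∑ j, (A i j) ^ 2)

/-- Operator (spectral) norm of a real matrix. -/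
noncomputable def opNorm {m n : ℕ} (A : Matrix (Fin m) (Fin n) ℝ) : ℝ :=
  ‖LinearMap.toContinuousLinearMap (Matrix.toEuclideanLin A)‖

/-- Maximum absolute entry of a matrix. -/
noncomputable def entrySup {m n : ℕ} (A : Matrix (Fin m) (Fin n) ℝ) : ℝ :=
  ⨆ i, ⨆ j, |A i j|

/-- ℓ2 norm of the i-th row of a matrix. -/
noncomputable def rowNorm {m n : ℕ} (A : Matrix (Fin m) (Fin n) ℝ) (i : Fin m) : ℝ :=
  Real.sqrt (∑ j, (A i j) ^ 2)

/-- The (2,∞) norm: maximum ℓ2 norm of the rows. -/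
noncomputable def twoInf {m n : ℕ} (A : Matrix (Fin m) (Fin n) ℝ) : ℝ :=
  ⨆ i, rowNorm A i
theorem stmt1 {d1 d2 : ℕ} (α β : ℝ) (hβ : 0 < β)
    (x : Fin d1 → ℝ) (y : Fin d2 → ℝ) (Ω : Finset (Fin d1 × Fin d2))
    (hrow : ∀ i : Fin d1, ((Ω.filter (fun p => p.1 = i)).card : ℝ) ≤ α * d2)
    (hcol : ∀ j : Fin d2, ((Ω.filter (fun p => p.2 = j)).card : ℝ) ≤ α * d1) :
    ∑ p ∈ Ω, |x p.1| * |y p.2| ≤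
      (α / 2) * (β⁻¹ * d2 * (∑ i, (x i) ^ 2) + β * d1 * (∑ j, (y j) ^ 2)) := by
  have hβ' : (0:ℝ) < β⁻¹ := inv_pos.mpr hβ
  have step1 : ∑ p ∈ Ω, |x p.1| * |y p.2| ≤
      ∑ p ∈ Ω, (β⁻¹ * (x p.1)^2 + β * (y p.2)^2) / 2 := by
    refine Finset.sum_le_sum fun p _ => ?_
    have h1 : (|x p.1| - β * |y p.2|)^2 ≥ 0 := sq_nonneg _
    have h2 : |x p.1|^2 = (x p.1)^2 := sq_abs _
    have h3 : |y p.2|^2 = (y p.2)^2 := sq_abs _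
    rw [le_div_iff₀ (by norm_num : (0:ℝ) < 2), ← mul_le_mul_iff_right₀ hβ]
    have h4 : β * (β⁻¹ * x p.1 ^ 2 + β * y p.2 ^ 2) = x p.1 ^ 2 + β ^ 2 * y p.2 ^ 2 := by
      field_simp
    rw [h4]
    nlinarith [h1, h2, h3]
  have fib1 : ∑ p ∈ Ω, (x p.1)^2 =
      ∑ i : Fin d1, ((Ω.filter (fun p => p.1 = i)).card : ℝ) * (x i)^2 := by
    rw [← Finset.sum_fiberwise_of_maps_to (g := Prod.fst) (fun p _ => Finset.mem_univ p.1)]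
    refine Finset.sum_congr rfl fun i _ => ?_
    rw [Finset.sum_congr rfl (fun p hp => by
      rw [(Finset.mem_filter.mp hp).2]), Finset.sum_const, nsmul_eq_mul]
  have fib2 : ∑ p ∈ Ω, (y p.2)^2 =
      ∑ j : Fin d2, ((Ω.filter (fun p => p.2 = j)).card : ℝ) * (y j)^2 := by
    rw [← Finset.sum_fiberwise_of_maps_to (g := Prod.snd) (fun p _ => Finset.mem_univ p.2)]
    refine Finset.sum_congr rfl fun j _ => ?_
    rw [Finset.sum_congr rfl (fun p hp => by
      rw [(Finset.mem_filter.mp hp).2]), Finset.sum_const, nsmul_eq_mul]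
  have b1 : ∑ p ∈ Ω, (x p.1)^2 ≤ α * d2 * ∑ i, (x i)^2 := by
    rw [fib1, Finset.mul_sum]
    exact Finset.sum_le_sum fun i _ =>
      mul_le_mul_of_nonneg_right (hrow i) (sq_nonneg _)
  have b2 : ∑ p ∈ Ω, (y p.2)^2 ≤ α * d1 * ∑ j, (y j)^2 := by
    rw [fib2, Finset.mul_sum]
    exact Finset.sum_le_sum fun j _ =>
      mul_le_mul_of_nonneg_right (hcol j) (sq_nonneg _)
  calc ∑ p ∈ Ω, |x p.1| * |y p.2|
      ≤ ∑ p ∈ Ω, (β⁻¹ * (x p.1)^2 + β * (y p.2)^2) / 2 := step1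
    _ = (β⁻¹ * ∑ p ∈ Ω, (x p.1)^2 + β * ∑ p ∈ Ω, (y p.2)^2) / 2 := by
        rw [Finset.mul_sum, Finset.mul_sum, ← Finset.sum_add_distrib, Finset.sum_div]
    _ ≤ (β⁻¹ * (α * d2 * ∑ i, (x i)^2) + β * (α * d1 * ∑ j, (y j)^2)) / 2 := by
        apply div_le_div_of_nonneg_right ?_ (by norm_num) |>.trans_eq rfl
        exact add_le_add (mul_le_mul_of_nonneg_left b1 hβ'.le)
          (mul_le_mul_of_nonneg_left b2 hβ.le)
    _ = (α / 2) * (β⁻¹ * d2 * (∑ i, (x i)^2) + β * d1 * (∑ j, (y j)^2)) := by ring
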